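/- Sklar's theorem (bivariate, continuous case): for a pair (Y₁, Y₂) of real random variables with continuous marginal CDFs F₁, F₂ and joint CDF F, there exists a unique copula C : [0,1]² → [0,1] such that F(y₁, y₂) = C(F₁(y₁), F₂(y₂)) for all y₁, y₂. -/

import Mathlib

open MeasureTheory Set

/-- A bivariate copula: grounded, with uniform margins, and 2-increasing on `[0,1]²`. -/
def IsCopula (C : ℝ → ℝ → ℝ) : Prop :=
  (∀ u ∈ Icc (0:ℝ) 1, C u 0 = 0 ∧ C 0 u = 0 ∧ C u 1 = u ∧ C 1 u = u) ∧
  (∀ u₁ u₂ v₁ v₂, u₁ ∈ Icc (0:ℝ) 1 → u₂ ∈ Icc (0:ℝ) 1 → v₁ ∈ Icc (0:ℝ) 1 →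
    v₂ ∈ Icc (0:ℝ) 1 → u₁ ≤ u₂ → v₁ ≤ v₂ →
    0 ≤ C u₂ v₂ - C u₂ v₁ - C u₁ v₂ + C u₁ v₁)

theorem sklar_bivariate_continuous
    {Ω : Type*} [MeasurableSpace Ω] (P : Measure Ω) [IsProbabilityMeasure P]
    (Y₁ Y₂ : Ω → ℝ) (hY₁ : Measurable Y₁) (hY₂ : Measurable Y₂)
    (F₁ F₂ : ℝ → ℝ) (F : ℝ → ℝ → ℝ)
    (hF₁ : ∀ y, F₁ y = (P {ω | Y₁ ω ≤ y}).toReal)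
    (hF₂ : ∀ y, F₂ y = (P {ω | Y₂ ω ≤ y}).toReal)
    (hF : ∀ y₁ y₂, F y₁ y₂ = (P {ω | Y₁ ω ≤ y₁ ∧ Y₂ ω ≤ y₂}).toReal)
    (hc₁ : Continuous F₁) (hc₂ : Continuous F₂) :
    ∃ C : ℝ → ℝ → ℝ, IsCopula C ∧ (∀ y₁ y₂, F y₁ y₂ = C (F₁ y₁) (F₂ y₂)) ∧
      ∀ C' : ℝ → ℝ → ℝ, IsCopula C' → (∀ y₁ y₂, F y₁ y₂ = C' (F₁ y₁) (F₂ y₂)) →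
        ∀ u ∈ Icc (0:ℝ) 1, ∀ v ∈ Icc (0:ℝ) 1, C u v = C' u v := by
  classical
  have hA : ∀ y, MeasurableSet {ω | Y₁ ω ≤ y} := fun y => hY₁ measurableSet_Iic
  have hB : ∀ z, MeasurableSet {ω | Y₂ ω ≤ z} := fun z => hY₂ measurableSet_Iic
  have hFi : ∀ y z, F y z = (P ({ω | Y₁ ω ≤ y} ∩ {ω | Y₂ ω ≤ z})).toReal := fun y z => hF y z
  -- the key rectangle inequality at the level of measures
  have key : ∀ (S S' T T' : Set Ω), MeasurableSet S' → MeasurableSet T → S ⊆ S' → T ⊆ T' →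
      (P (S ∩ T')).toReal + (P (S' ∩ T)).toReal
        ≤ (P (S' ∩ T')).toReal + (P (S ∩ T)).toReal := by
    intro S S' T T' hS' hT hSS hTT
    have h2 : (S ∩ T') ∩ (S' ∩ T) = S ∩ T := by
      ext x
      constructor
      · rintro ⟨⟨h1, _⟩, ⟨_, h4⟩⟩; exact ⟨h1, h4⟩
      · rintro ⟨h1, h2⟩; exact ⟨⟨h1, hTT h2⟩, hSS h1, h2⟩
    have h1 : (S ∩ T') ∪ (S' ∩ T) ⊆ S' ∩ T' := by
      rintro x (⟨ha, hb⟩ | ⟨ha, hb⟩)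
      · exact ⟨hSS ha, hb⟩
      · exact ⟨ha, hTT hb⟩
    have hkey : P (S ∩ T') + P (S' ∩ T) ≤ P (S' ∩ T') + P (S ∩ T) := by
      rw [← measure_union_add_inter (S ∩ T') (hS'.inter hT), h2]
      exact add_le_add (measure_mono h1) le_rfl
    have hne : P (S' ∩ T') + P (S ∩ T) ≠ ⊤ :=
      ENNReal.add_ne_top.mpr ⟨measure_ne_top P _, measure_ne_top P _⟩
    have := ENNReal.toReal_mono hne hkey
    rwa [ENNReal.toReal_add (measure_ne_top P _) (measure_ne_top P _),
      ENNReal.toReal_add (measure_ne_top P _) (measure_ne_top P _)] at this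
  -- basic facts
  have hle1 : ∀ s : Set Ω, (P s).toReal ≤ 1 := fun s => by
    simpa using ENNReal.toReal_mono ENNReal.one_ne_top (prob_le_one (μ := P) (s := s))
  have h01 : ∀ y, F₁ y ∈ Icc (0:ℝ) 1 := fun y => by
    rw [hF₁]; exact ⟨ENNReal.toReal_nonneg, hle1 _⟩
  have h02 : ∀ z, F₂ z ∈ Icc (0:ℝ) 1 := fun z => by
    rw [hF₂]; exact ⟨ENNReal.toReal_nonneg, hle1 _⟩
  have Fnn : ∀ y z, 0 ≤ F y z := fun y z => by rw [hF]; exact ENNReal.toReal_nonneg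
  have FleF₁ : ∀ y z, F y z ≤ F₁ y := fun y z => by
    rw [hF, hF₁]
    exact ENNReal.toReal_mono (measure_ne_top P _) (measure_mono (fun ω h => h.1))
  have FleF₂ : ∀ y z, F y z ≤ F₂ z := fun y z => by
    rw [hF, hF₂]
    exact ENNReal.toReal_mono (measure_ne_top P _) (measure_mono (fun ω h => h.2))
  have hm₁ : ∀ y y', y ≤ y' → F₁ y ≤ F₁ y' := fun y y' h => by
    rw [hF₁, hF₁]
    exact ENNReal.toReal_mono (measure_ne_top P _)
      (measure_mono (fun ω (hω : Y₁ ω ≤ y) => hω.trans h))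
  have hm₂ : ∀ z z', z ≤ z' → F₂ z ≤ F₂ z' := fun z z' h => by
    rw [hF₂, hF₂]
    exact ENNReal.toReal_mono (measure_ne_top P _)
      (measure_mono (fun ω (hω : Y₂ ω ≤ z) => hω.trans h))
  have Fmono₁ : ∀ y y' z, y ≤ y' → F y z ≤ F y' z := fun y y' z h => by
    rw [hFi, hFi]
    exact ENNReal.toReal_mono (measure_ne_top P _)
      (measure_mono (inter_subset_inter_left _ (fun ω (hω : Y₁ ω ≤ y) => hω.trans h)))
  have Fmono₂ : ∀ y z z', z ≤ z' → F y z ≤ F y z' := fun y z z' h => by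
    rw [hFi, hFi]
    exact ENNReal.toReal_mono (measure_ne_top P _)
      (measure_mono (inter_subset_inter_right _ (fun ω (hω : Y₂ ω ≤ z) => hω.trans h)))
  have lip₁ : ∀ y y' z, y ≤ y' → F₁ y + F y' z ≤ F₁ y' + F y z := by
    intro y y' z h
    rw [hFi, hFi, hF₁, hF₁]
    have := key {ω | Y₁ ω ≤ y} {ω | Y₁ ω ≤ y'} {ω | Y₂ ω ≤ z} univ (hA y') (hB z)
      (fun ω (hω : Y₁ ω ≤ y) => hω.trans h) (subset_univ _)
    simpa [Set.inter_univ] using this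
  have lip₂ : ∀ y z z', z ≤ z' → F₂ z + F y z' ≤ F₂ z' + F y z := by
    intro y z z' h
    rw [hFi, hFi, hF₂, hF₂]
    have := key {ω | Y₁ ω ≤ y} univ {ω | Y₂ ω ≤ z} {ω | Y₂ ω ≤ z'} MeasurableSet.univ (hB z)
      (subset_univ _) (fun ω (hω : Y₂ ω ≤ z) => hω.trans h)
    simp only [Set.univ_inter] at this
    linarith
  have rect : ∀ y y' z z', y ≤ y' → z ≤ z' → F y z' + F y' z ≤ F y' z' + F y z := by
    intro y y' z z' h1 h2
    rw [hFi, hFi, hFi, hFi]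
    exact key _ _ _ _ (hA y') (hB z)
      (fun ω (hω : Y₁ ω ≤ y) => hω.trans h1) (fun ω (hω : Y₂ ω ≤ z) => hω.trans h2)
  have Flow : ∀ y z, F₁ y + F₂ z - 1 ≤ F y z := by
    intro y z
    have h : P {ω | Y₁ ω ≤ y} + P {ω | Y₂ ω ≤ z}
        ≤ 1 + P ({ω | Y₁ ω ≤ y} ∩ {ω | Y₂ ω ≤ z}) := by
      rw [← measure_union_add_inter _ (hB z)]
      gcongr
      exact prob_le_one
    have hne : (1 : ENNReal) + P ({ω | Y₁ ω ≤ y} ∩ {ω | Y₂ ω ≤ z}) ≠ ⊤ :=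
      ENNReal.add_ne_top.mpr ⟨ENNReal.one_ne_top, measure_ne_top P _⟩
    have h' := ENNReal.toReal_mono hne h
    rw [ENNReal.toReal_add (measure_ne_top P _) (measure_ne_top P _),
      ENNReal.toReal_add ENNReal.one_ne_top (measure_ne_top P _), ENNReal.toReal_one] at h'
    rw [hF₁, hF₂, hFi]
    linarith
  -- value-based versions
  have mono₁' : ∀ y y', F₁ y ≤ F₁ y' → ∀ z, F y z ≤ F y' z := by
    intro y y' h z
    rcases le_total y y' with h'|h'
    · exact Fmono₁ y y' z h'
    · have := lip₁ y' y z h'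
      linarith
  have mono₂' : ∀ z z', F₂ z ≤ F₂ z' → ∀ y, F y z ≤ F y z' := by
    intro z z' h y
    rcases le_total z z' with h'|h'
    · exact Fmono₂ y z z' h'
    · have := lip₂ y z' z h'
      linarith
  have inv₁ : ∀ y y', F₁ y = F₁ y' → ∀ z, F y z = F y' z := fun y y' h z =>
    le_antisymm (mono₁' y y' h.le z) (mono₁' y' y h.ge z)
  have inv₂ : ∀ z z', F₂ z = F₂ z' → ∀ y, F y z = F y z' := fun z z' h y =>
    le_antisymm (mono₂' z z' h.le y) (mono₂' z' z h.ge y)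
  have lip₁' : ∀ y y', F₁ y ≤ F₁ y' → ∀ z, F₁ y + F y' z ≤ F₁ y' + F y z := by
    intro y y' h z
    rcases le_total y y' with h'|h'
    · exact lip₁ y y' z h'
    · have := Fmono₁ y' y z h'
      linarith
  have lip₂' : ∀ z z', F₂ z ≤ F₂ z' → ∀ y, F₂ z + F y z' ≤ F₂ z' + F y z := by
    intro z z' h y
    rcases le_total z z' with h'|h'
    · exact lip₂ y z z' h'
    · have := Fmono₂ y z' z h'
      linarith
  have rect' : ∀ y y' z z', F₁ y ≤ F₁ y' → F₂ z ≤ F₂ z' →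
      F y z' + F y' z ≤ F y' z' + F y z := by
    intro y y' z z' h1 h2
    rcases le_total y y' with hy|hy
    · rcases le_total z z' with hz|hz
      · exact rect y y' z z' hy hz
      · have he : F₂ z = F₂ z' := le_antisymm h2 (hm₂ z' z hz)
        rw [inv₂ z z' he y, inv₂ z z' he y']
        linarith
    · have he : F₁ y = F₁ y' := le_antisymm h1 (hm₁ y' y hy)
      rw [inv₁ y y' he z, inv₁ y y' he z']
  -- surjectivity of the marginals onto (0,1)
  have hsurj : ∀ (G : ℝ → ℝ) (Y : Ω → ℝ), Measurable Y → Continuous G →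
      (∀ y, G y = (P {ω | Y ω ≤ y}).toReal) → ∀ u : ℝ, 0 < u → u < 1 → ∃ y, G y = u := by
    intro G Y hY hc hG u h0 h1
    have hmap : IsProbabilityMeasure (P.map Y) := Measure.isProbabilityMeasure_map hY.aemeasurable
    have hcdf : ∀ y, G y = ProbabilityTheory.cdf (P.map Y) y := by
      intro y
      rw [ProbabilityTheory.cdf_eq_real, measureReal_def, Measure.map_apply hY measurableSet_Iic, hG]
      rfl
    have htT : Filter.Tendsto G Filter.atTop (nhds 1) :=
      (ProbabilityTheory.tendsto_cdf_atTop (P.map Y)).congr (fun y => (hcdf y).symm)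
    have htB : Filter.Tendsto G Filter.atBot (nhds 0) :=
      (ProbabilityTheory.tendsto_cdf_atBot (P.map Y)).congr (fun y => (hcdf y).symm)
    obtain ⟨a, ha⟩ := (htB.eventually_lt_const h0).exists
    obtain ⟨b, hb⟩ := (htT.eventually_const_lt h1).exists
    exact intermediate_value_univ a b hc ⟨ha.le, hb.le⟩
  have hsurj₁' : ∀ u : ℝ, ∃ y, 0 < u → u < 1 → F₁ y = u := by
    intro u
    by_cases h : 0 < u ∧ u < 1
    · obtain ⟨y, hy⟩ := hsurj F₁ Y₁ hY₁ hc₁ hF₁ u h.1 h.2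
      exact ⟨y, fun _ _ => hy⟩
    · exact ⟨0, fun a b => absurd ⟨a, b⟩ h⟩
  have hsurj₂' : ∀ u : ℝ, ∃ z, 0 < u → u < 1 → F₂ z = u := by
    intro u
    by_cases h : 0 < u ∧ u < 1
    · obtain ⟨z, hz⟩ := hsurj F₂ Y₂ hY₂ hc₂ hF₂ u h.1 h.2
      exact ⟨z, fun _ _ => hz⟩
    · exact ⟨0, fun a b => absurd ⟨a, b⟩ h⟩
  choose Q₁ hQ₁ using hsurj₁'
  choose Q₂ hQ₂ using hsurj₂'
  -- the copula
  set C : ℝ → ℝ → ℝ := fun u v =>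
    if u ≤ 0 ∨ v ≤ 0 then 0 else if 1 ≤ u ∧ 1 ≤ v then 1
    else if 1 ≤ u then v else if 1 ≤ v then u else F (Q₁ u) (Q₂ v) with hCdef
  have hCzero : ∀ u v, u ≤ 0 ∨ v ≤ 0 → C u v = 0 := by
    intro u v h
    simp only [hCdef]
    rw [if_pos h]
  have hCint : ∀ u v, 0 < u → u < 1 → 0 < v → v < 1 → C u v = F (Q₁ u) (Q₂ v) := by
    intro u v hu0 hu1 hv0 hv1
    simp only [hCdef]
    rw [if_neg (by push_neg; constructor <;> linarith), if_neg (by rintro ⟨h, _⟩; linarith),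
      if_neg (by intro h; linarith), if_neg (by intro h; linarith)]
  have hCnn : ∀ u v, 0 ≤ C u v := by
    intro u v
    simp only [hCdef]
    split_ifs with h1 h2 h3 h4
    · exact le_rfl
    · linarith
    · push_neg at h1; linarith [h1.2]
    · push_neg at h1; linarith [h1.1]
    · exact Fnn _ _
  have hC1v : ∀ v ∈ Icc (0:ℝ) 1, C 1 v = v := by
    intro v hv
    simp only [hCdef]
    split_ifs with h1 h2 h3 h4
    · rcases h1 with h | h
      · linarith
      · linarith [le_antisymm h hv.1]
    · linarith [le_antisymm hv.2 h2.2]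
    · rfl
    · exact absurd le_rfl h3
    · exact absurd le_rfl h3
  have hCu1 : ∀ u ∈ Icc (0:ℝ) 1, C u 1 = u := by
    intro u hu
    simp only [hCdef]
    split_ifs with h1 h2 h3 h4
    · rcases h1 with h | h
      · linarith [le_antisymm h hu.1]
      · linarith
    · linarith [le_antisymm hu.2 h2.1]
    · exact absurd ⟨h3, le_rfl⟩ h2
    · rfl
    · exact absurd le_rfl h4
  -- C is below each coordinate and above the Fréchet lower bound
  have hCleV : ∀ u ∈ Icc (0:ℝ) 1, ∀ v ∈ Icc (0:ℝ) 1, C u v ≤ v := by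
    intro u hu v hv
    simp only [hCdef]
    split_ifs with h1 h2 h3 h4
    · exact hv.1
    · exact h2.2
    · exact le_rfl
    · linarith [hu.2, h4]
    · push_neg at h1 h3 h4
      calc F (Q₁ u) (Q₂ v) ≤ F₂ (Q₂ v) := FleF₂ _ _
        _ = v := hQ₂ v h1.2 h4
  have hCleU : ∀ u ∈ Icc (0:ℝ) 1, ∀ v ∈ Icc (0:ℝ) 1, C u v ≤ u := by
    intro u hu v hv
    simp only [hCdef]
    split_ifs with h1 h2 h3 h4
    · exact hu.1
    · exact h2.1
    · push_neg at h2
      linarith [hv.2, h2 h3]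
    · exact le_rfl
    · push_neg at h1 h3
      calc F (Q₁ u) (Q₂ v) ≤ F₁ (Q₁ u) := FleF₁ _ _
        _ = u := hQ₁ u h1.1 h3
  have hCvlow : ∀ u ∈ Icc (0:ℝ) 1, ∀ v ∈ Icc (0:ℝ) 1, u + v - 1 ≤ C u v := by
    intro u hu v hv
    simp only [hCdef]
    split_ifs with h1 h2 h3 h4
    · rcases h1 with h | h
      · linarith [hv.2]
      · linarith [hu.2]
    · linarith [hu.2, hv.2]
    · linarith [hu.2]
    · linarith [hv.2]
    · push_neg at h1 h3 h4
      have := Flow (Q₁ u) (Q₂ v)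
      rw [hQ₁ u h1.1 h3, hQ₂ v h1.2 h4] at this
      exact this
  -- monotonicity of C in each variable
  have hCmonoV : ∀ u ∈ Icc (0:ℝ) 1, ∀ v ∈ Icc (0:ℝ) 1, ∀ v' ∈ Icc (0:ℝ) 1,
      v ≤ v' → C u v ≤ C u v' := by
    intro u hu v hv v' hv' hvv'
    by_cases hu0 : u ≤ 0
    · rw [hCzero _ _ (Or.inl hu0), hCzero _ _ (Or.inl hu0)]
    by_cases hv0 : v ≤ 0
    · rw [hCzero _ _ (Or.inr hv0)]
      exact hCnn _ _
    by_cases hu1 : 1 ≤ u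
    · have he : u = 1 := le_antisymm hu.2 hu1
      subst he
      rw [hC1v v hv, hC1v v' hv']
      exact hvv'
    by_cases hv'1 : 1 ≤ v'
    · have he : v' = 1 := le_antisymm hv'.2 hv'1
      subst he
      rw [hCu1 u hu]
      exact hCleU u hu v hv
    push_neg at hu0 hv0 hu1 hv'1
    have hv1 : v < 1 := lt_of_le_of_lt hvv' hv'1
    have hv'0 : 0 < v' := lt_of_lt_of_le hv0 hvv'
    rw [hCint u v hu0 hu1 hv0 hv1, hCint u v' hu0 hu1 hv'0 hv'1]
    apply mono₂'
    rw [hQ₂ v hv0 hv1, hQ₂ v' hv'0 hv'1]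
    exact hvv'
  have hCmonoU : ∀ v ∈ Icc (0:ℝ) 1, ∀ u ∈ Icc (0:ℝ) 1, ∀ u' ∈ Icc (0:ℝ) 1,
      u ≤ u' → C u v ≤ C u' v := by
    intro v hv u hu u' hu' huu'
    by_cases hv0 : v ≤ 0
    · rw [hCzero _ _ (Or.inr hv0), hCzero _ _ (Or.inr hv0)]
    by_cases hu0 : u ≤ 0
    · rw [hCzero _ _ (Or.inl hu0)]
      exact hCnn _ _
    by_cases hv1 : 1 ≤ v
    · have he : v = 1 := le_antisymm hv.2 hv1
      subst he
      rw [hCu1 u hu, hCu1 u' hu']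
      exact huu'
    by_cases hu'1 : 1 ≤ u'
    · have he : u' = 1 := le_antisymm hu'.2 hu'1
      subst he
      rw [hC1v v hv]
      exact hCleV u hu v hv
    push_neg at hv0 hu0 hv1 hu'1
    have hu1 : u < 1 := lt_of_le_of_lt huu' hu'1
    have hu'0 : 0 < u' := lt_of_lt_of_le hu0 huu'
    rw [hCint u v hu0 hu1 hv0 hv1, hCint u' v hu'0 hu'1 hv0 hv1]
    apply mono₁'
    rw [hQ₁ u hu0 hu1, hQ₁ u' hu'0 hu'1]
    exact huu'
  -- Lipschitz bounds for C in each variable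
  have hClipV : ∀ u ∈ Icc (0:ℝ) 1, ∀ v ∈ Icc (0:ℝ) 1, ∀ v' ∈ Icc (0:ℝ) 1,
      v ≤ v' → C u v' - C u v ≤ v' - v := by
    intro u hu v hv v' hv' hvv'
    by_cases hu0 : u ≤ 0
    · rw [hCzero _ _ (Or.inl hu0), hCzero _ _ (Or.inl hu0)]
      linarith
    by_cases hv0 : v ≤ 0
    · have he : v = 0 := le_antisymm hv0 hv.1
      subst he
      rw [hCzero _ _ (Or.inr le_rfl)]
      linarith [hCleV u hu v' hv']
    by_cases hu1 : 1 ≤ u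
    · have he : u = 1 := le_antisymm hu.2 hu1
      subst he
      rw [hC1v v hv, hC1v v' hv']
    by_cases hv'1 : 1 ≤ v'
    · have he : v' = 1 := le_antisymm hv'.2 hv'1
      subst he
      rw [hCu1 u hu]
      linarith [hCvlow u hu v hv]
    push_neg at hu0 hv0 hu1 hv'1
    have hv1 : v < 1 := lt_of_le_of_lt hvv' hv'1
    have hv'0 : 0 < v' := lt_of_lt_of_le hv0 hvv'
    rw [hCint u v hu0 hu1 hv0 hv1, hCint u v' hu0 hu1 hv'0 hv'1]
    have := lip₂' (Q₂ v) (Q₂ v') (by rw [hQ₂ v hv0 hv1, hQ₂ v' hv'0 hv'1]; exact hvv') (Q₁ u)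
    rw [hQ₂ v hv0 hv1, hQ₂ v' hv'0 hv'1] at this
    linarith
  have hClipU : ∀ v ∈ Icc (0:ℝ) 1, ∀ u ∈ Icc (0:ℝ) 1, ∀ u' ∈ Icc (0:ℝ) 1,
      u ≤ u' → C u' v - C u v ≤ u' - u := by
    intro v hv u hu u' hu' huu'
    by_cases hv0 : v ≤ 0
    · rw [hCzero _ _ (Or.inr hv0), hCzero _ _ (Or.inr hv0)]
      linarith
    by_cases hu0 : u ≤ 0
    · have he : u = 0 := le_antisymm hu0 hu.1
      subst he
      rw [hCzero _ _ (Or.inl le_rfl)]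
      linarith [hCleU u' hu' v hv]
    by_cases hv1 : 1 ≤ v
    · have he : v = 1 := le_antisymm hv.2 hv1
      subst he
      rw [hCu1 u hu, hCu1 u' hu']
    by_cases hu'1 : 1 ≤ u'
    · have he : u' = 1 := le_antisymm hu'.2 hu'1
      subst he
      rw [hC1v v hv]
      linarith [hCvlow u hu v hv]
    push_neg at hv0 hu0 hv1 hu'1
    have hu1 : u < 1 := lt_of_le_of_lt huu' hu'1
    have hu'0 : 0 < u' := lt_of_lt_of_le hu0 huu'
    rw [hCint u v hu0 hu1 hv0 hv1, hCint u' v hu'0 hu'1 hv0 hv1]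
    have := lip₁' (Q₁ u) (Q₁ u') (by rw [hQ₁ u hu0 hu1, hQ₁ u' hu'0 hu'1]; exact huu') (Q₂ v)
    rw [hQ₁ u hu0 hu1, hQ₁ u' hu'0 hu'1] at this
    linarith
  -- C is a copula
  have hcop : IsCopula C := by
    constructor
    · intro u hu
      exact ⟨hCzero u 0 (Or.inr le_rfl), hCzero 0 u (Or.inl le_rfl), hCu1 u hu, hC1v u hu⟩
    · intro u₁ u₂ v₁ v₂ hu₁ hu₂ hv₁ hv₂ h12 hv12
      rcases eq_or_lt_of_le h12 with rfl | hult
      · linarith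
      rcases eq_or_lt_of_le hv12 with rfl | hvlt
      · linarith
      by_cases hu₁0 : u₁ ≤ 0
      · rw [hCzero u₁ v₂ (Or.inl hu₁0), hCzero u₁ v₁ (Or.inl hu₁0)]
        linarith [hCmonoV u₂ hu₂ v₁ hv₁ v₂ hv₂ hv12]
      by_cases hv₁0 : v₁ ≤ 0
      · rw [hCzero u₂ v₁ (Or.inr hv₁0), hCzero u₁ v₁ (Or.inr hv₁0)]
        linarith [hCmonoU v₂ hv₂ u₁ hu₁ u₂ hu₂ h12]
      by_cases hu₂1 : 1 ≤ u₂
      · have he : u₂ = 1 := le_antisymm hu₂.2 hu₂1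
        subst he
        rw [hC1v v₁ hv₁, hC1v v₂ hv₂]
        linarith [hClipV u₁ hu₁ v₁ hv₁ v₂ hv₂ hv12]
      by_cases hv₂1 : 1 ≤ v₂
      · have he : v₂ = 1 := le_antisymm hv₂.2 hv₂1
        subst he
        rw [hCu1 u₁ hu₁, hCu1 u₂ hu₂]
        linarith [hClipU v₁ hv₁ u₁ hu₁ u₂ hu₂ h12]
      push_neg at hu₁0 hv₁0 hu₂1 hv₂1
      have hu₂0 : 0 < u₂ := lt_trans hu₁0 hult
      have hv₂0 : 0 < v₂ := lt_trans hv₁0 hvlt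
      have hu₁1 : u₁ < 1 := lt_trans hult hu₂1
      have hv₁1 : v₁ < 1 := lt_trans hvlt hv₂1
      rw [hCint u₁ v₁ hu₁0 hu₁1 hv₁0 hv₁1, hCint u₁ v₂ hu₁0 hu₁1 hv₂0 hv₂1,
        hCint u₂ v₁ hu₂0 hu₂1 hv₁0 hv₁1, hCint u₂ v₂ hu₂0 hu₂1 hv₂0 hv₂1]
      have := rect' (Q₁ u₁) (Q₁ u₂) (Q₂ v₁) (Q₂ v₂)
        (by rw [hQ₁ u₁ hu₁0 hu₁1, hQ₁ u₂ hu₂0 hu₂1]; exact h12)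
        (by rw [hQ₂ v₁ hv₁0 hv₁1, hQ₂ v₂ hv₂0 hv₂1]; exact hv12)
      linarith
  -- representation
  have hrep : ∀ y₁ y₂, F y₁ y₂ = C (F₁ y₁) (F₂ y₂) := by
    intro y₁ y₂
    by_cases h1 : F₁ y₁ ≤ 0
    · rw [hCzero _ _ (Or.inl h1)]
      linarith [FleF₁ y₁ y₂, Fnn y₁ y₂]
    by_cases h2 : F₂ y₂ ≤ 0
    · rw [hCzero _ _ (Or.inr h2)]
      linarith [FleF₂ y₁ y₂, Fnn y₁ y₂]
    by_cases h3 : 1 ≤ F₁ y₁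
    · have he : F₁ y₁ = 1 := le_antisymm (h01 y₁).2 h3
      rw [he, hC1v _ (h02 y₂)]
      have := Flow y₁ y₂
      rw [he] at this
      linarith [FleF₂ y₁ y₂]
    by_cases h4 : 1 ≤ F₂ y₂
    · have he : F₂ y₂ = 1 := le_antisymm (h02 y₂).2 h4
      rw [he, hCu1 _ (h01 y₁)]
      have := Flow y₁ y₂
      rw [he] at this
      linarith [FleF₁ y₁ y₂]
    push_neg at h1 h2 h3 h4
    rw [hCint _ _ h1 h3 h2 h4]
    calc F y₁ y₂ = F (Q₁ (F₁ y₁)) y₂ := inv₁ y₁ _ (hQ₁ (F₁ y₁) h1 h3).symm y₂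
      _ = F (Q₁ (F₁ y₁)) (Q₂ (F₂ y₂)) := inv₂ y₂ _ (hQ₂ (F₂ y₂) h2 h4).symm _
  refine ⟨C, hcop, hrep, ?_⟩
  -- uniqueness
  intro C' hC' hrep' u hu v hv
  obtain ⟨hb', _⟩ := hC'
  by_cases h1 : u ≤ 0
  · have he : u = 0 := le_antisymm h1 hu.1
    subst he
    rw [hCzero 0 v (Or.inl le_rfl), (hb' v hv).2.1]
  by_cases h2 : v ≤ 0
  · have he : v = 0 := le_antisymm h2 hv.1
    subst he
    rw [hCzero u 0 (Or.inr le_rfl), (hb' u hu).1]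
  by_cases h3 : 1 ≤ u
  · have he : u = 1 := le_antisymm hu.2 h3
    subst he
    rw [hC1v v hv, (hb' v hv).2.2.2]
  by_cases h4 : 1 ≤ v
  · have he : v = 1 := le_antisymm hv.2 h4
    subst he
    rw [hCu1 u hu, (hb' u hu).2.2.1]
  push_neg at h1 h2 h3 h4
  obtain ⟨y, hy⟩ := hsurj F₁ Y₁ hY₁ hc₁ hF₁ u h1 h3
  obtain ⟨z, hz⟩ := hsurj F₂ Y₂ hY₂ hc₂ hF₂ v h2 h4
  calc C u v = C (F₁ y) (F₂ z) := by rw [hy, hz]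
    _ = F y z := (hrep y z).symm
    _ = C' (F₁ y) (F₂ z) := hrep' y z
    _ = C' u v := by rw [hy, hz]
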